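/- arXiv:1008.2729 — 4 statements merged into one kernel-verified Lean document; each statement's English description precedes it below -/
import Mathlib

section
/- For any natural number k and any 2×k matrices P and Q over 𝔽₂, the quotient of 𝔽₂⁴ by the range of the linear map given by the block matrix Δ = [[P, I₂],[Q, I₂]] has dimension 2 − rank(P + Q). (Attaching a wire increases the dimension of H¹ by 2, 1, or 0 according to complete feedback, partial feedback, or no feedback.) -/
/-- The field with two elements. -/
notation "𝔽₂" => ZMod 2

/-- for any `k` and any 2×k matrices `P, Q` over `𝔽₂`, the
quotient of `𝔽₂⁴` by the range of the linear map given by the Mayer–Vietoris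
block matrix `Δ = [[P, I₂],[Q, I₂]]` has dimension `2 - rank (P + Q)`. -/
theorem coker_MV_difference_matrix (k : ℕ)
    (P Q : Matrix (Fin 2) (Fin k) 𝔽₂) :
    Module.finrank 𝔽₂
        ((Fin 2 ⊕ Fin 2 → 𝔽₂) ⧸
          LinearMap.range (Matrix.fromBlocks P (1 : Matrix (Fin 2) (Fin 2) 𝔽₂)
            Q (1 : Matrix (Fin 2) (Fin 2) 𝔽₂)).mulVecLin) =
      2 - (P + Q).rank := by
  classical
  set M := P + Q with hM
  set R : Submodule 𝔽₂ (Fin 2 → 𝔽₂) := LinearMap.range M.mulVecLin with hR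
  -- the "difference" map
  set f : (Fin 2 ⊕ Fin 2 → 𝔽₂) →ₗ[𝔽₂] (Fin 2 → 𝔽₂) :=
    LinearMap.funLeft 𝔽₂ 𝔽₂ Sum.inl + LinearMap.funLeft 𝔽₂ 𝔽₂ Sum.inr with hf
  set g : (Fin 2 ⊕ Fin 2 → 𝔽₂) →ₗ[𝔽₂] ((Fin 2 → 𝔽₂) ⧸ R) := R.mkQ ∘ₗ f with hg
  have hgsurj : Function.Surjective g := by
    intro x
    obtain ⟨y, rfl⟩ := R.mkQ_surjective x
    exact ⟨Sum.elim y 0, by simp [hg, hf, LinearMap.funLeft]⟩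
  have hker : LinearMap.ker g =
      LinearMap.range (Matrix.fromBlocks P (1 : Matrix (Fin 2) (Fin 2) 𝔽₂)
        Q (1 : Matrix (Fin 2) (Fin 2) 𝔽₂)).mulVecLin := by
    ext v
    simp only [LinearMap.mem_ker, hg, LinearMap.comp_apply, Submodule.mkQ_apply,
      Submodule.Quotient.mk_eq_zero, hR, LinearMap.mem_range, Matrix.mulVecLin_apply,
      hf, LinearMap.add_apply, LinearMap.funLeft_apply]
    have key : ∀ a b c d : 𝔽₂, a + b = c + d → b + (c + a) = d := by decide
    have key2 : ∀ a b : 𝔽₂, a + (b + a) = b := by decide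
    have key3 : ∀ a b c : 𝔽₂, a + b = a + c + (b + c) := by decide
    constructor
    · rintro ⟨u, hu⟩
      refine ⟨Sum.elim u (fun i => v (Sum.inl i) + P.mulVec u i), ?_⟩
      rw [Matrix.fromBlocks_mulVec]
      have hu' : ∀ i, P.mulVec u i + Q.mulVec u i = v (Sum.inl i) + v (Sum.inr i) := by
        intro i
        have := congrFun hu i
        simpa [hM, Matrix.add_mulVec, LinearMap.funLeft_apply] using this
      funext i
      cases i with
      | inl i =>
        simp only [Sum.elim_inl, Matrix.one_mulVec, Pi.add_apply]
        exact key2 _ _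
      | inr i =>
        simp only [Sum.elim_inr, Matrix.one_mulVec, Pi.add_apply]
        exact key _ _ _ _ (hu' i)
    · rintro ⟨w, rfl⟩
      refine ⟨w ∘ Sum.inl, ?_⟩
      have hw : w = Sum.elim (w ∘ Sum.inl) (w ∘ Sum.inr) := (Sum.elim_comp_inl_inr w).symm
      funext i
      rw [hM, Matrix.add_mulVec]
      conv_rhs => rw [hw]
      rw [Matrix.fromBlocks_mulVec]
      simp only [Sum.elim_inl, Sum.elim_inr, Matrix.one_mulVec, Pi.add_apply]
      exact key3 _ _ _
  have e := (LinearMap.quotKerEquivOfSurjective g hgsurj)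
  rw [hker] at e
  have hfr := e.finrank_eq
  have hq : Module.finrank 𝔽₂ ((Fin 2 → 𝔽₂) ⧸ R) + Module.finrank 𝔽₂ R = 2 := by
    have := Submodule.finrank_quotient_add_finrank R
    simpa using this
  have hrank : M.rank = Module.finrank 𝔽₂ R := rfl
  rw [hfr, hrank]
  omega
end

section
/- The 6×8 matrix M over 𝔽₂ with rows (1,0,1,0,0,0,0,0), (0,1,0,1,0,0,0,0), (1,0,0,0,1,1,0,0), (0,1,0,0,0,0,1,1), (0,0,0,1,1,0,1,0), (0,0,1,0,0,1,0,1) has rank 5. (Consequently the Čech complex of the switching sheaf of the combinational circuit with a shared input has H⁰ of dimension 3 and H¹ of dimension 1; in particular H¹ is nontrivial, detecting the two separate signal paths for the shared input.) -/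
/-- The Čech coboundary matrix `d⁰` of the switching sheaf of the combinational
circuit with a shared input. -/
def sharedInputCoboundary : Matrix (Fin 6) (Fin 8) 𝔽₂ :=
  !![1,0,1,0,0,0,0,0;
     0,1,0,1,0,0,0,0;
     1,0,0,0,1,1,0,0;
     0,1,0,0,0,0,1,1;
     0,0,0,1,1,0,1,0;
     0,0,1,0,0,1,0,1]

/-- The first five rows of the matrix. -/
def sicN : Matrix (Fin 5) (Fin 8) 𝔽₂ :=
  !![1,0,1,0,0,0,0,0;
     0,1,0,1,0,0,0,0;
     1,0,0,0,1,1,0,0;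
     0,1,0,0,0,0,1,1;
     0,0,0,1,1,0,1,0]

/-- Row-selection matrix expressing each row of `sharedInputCoboundary` in terms of `sicN`. -/
def sicP : Matrix (Fin 6) (Fin 5) 𝔽₂ :=
  !![1,0,0,0,0;
     0,1,0,0,0;
     0,0,1,0,0;
     0,0,0,1,0;
     0,0,0,0,1;
     1,1,1,1,1]

/-- Row selector. -/
def sicC : Matrix (Fin 5) (Fin 6) 𝔽₂ :=
  !![1,0,0,0,0,0;
     0,1,0,0,0,0;
     0,0,1,0,0,0;
     0,0,0,1,0,0;
     0,0,0,0,1,0]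

/-- Column selector. -/
def sicB : Matrix (Fin 8) (Fin 5) 𝔽₂ :=
  !![1,0,0,0,0;
     0,1,0,0,0;
     0,0,1,0,0;
     0,0,0,1,0;
     0,0,0,0,1;
     0,0,0,0,0;
     0,0,0,0,0;
     0,0,0,0,0]

/-- The leading 5×5 submatrix. -/
def sicS : Matrix (Fin 5) (Fin 5) 𝔽₂ :=
  !![1,0,1,0,0;
     0,1,0,1,0;
     1,0,0,0,1;
     0,1,0,0,0;
     0,0,0,1,1]

/-- Its inverse. -/
def sicT : Matrix (Fin 5) (Fin 5) 𝔽₂ :=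
  !![0,1,1,1,1;
     0,0,0,1,0;
     1,1,1,1,1;
     0,1,0,1,0;
     0,1,0,1,1]

lemma sic_factor : sharedInputCoboundary = sicP * sicN := by decide

lemma sic_sub : sicC * sharedInputCoboundary * sicB = sicS := by decide

lemma sicS_inv : sicS * sicT = 1 := by decide

/-- the 6×8 Čech coboundary matrix of the switching sheaf of the
shared-input combinational circuit has rank 5 (so `H⁰` has dimension 3 and `H¹`
has dimension 1). -/
theorem sharedInputCoboundary_rank : sharedInputCoboundary.rank = 5 := by
  apply le_antisymm
  · calc sharedInputCoboundary.rank = (sicP * sicN).rank := by rw [sic_factor]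
      _ ≤ sicN.rank := Matrix.rank_mul_le_right _ _
      _ ≤ 5 := Matrix.rank_le_height _
  · calc (5 : ℕ) = Fintype.card (Fin 5) := by simp
      _ = sicS.rank := (Matrix.rank_of_isUnit _ ((Matrix.isUnit_iff_isUnit_det _).mpr (Matrix.isUnit_det_of_right_inverse sicS_inv))).symm
      _ = (sicC * sharedInputCoboundary * sicB).rank := by rw [sic_sub]
      _ ≤ (sicC * sharedInputCoboundary).rank := Matrix.rank_mul_le_left _ _
      _ ≤ sharedInputCoboundary.rank := Matrix.rank_mul_le_right _ _
end

section
/- Let M be the 6×8 matrix over 𝔽₂ with rows (1,0,1,0,0,0,0,0), (0,1,0,1,0,0,0,0), (1,0,0,0,1,1,0,0), (0,1,0,0,0,0,1,1), (0,0,0,1,1,0,1,0), (0,0,1,0,0,1,0,1). The vector v₃ = (1,1,1,1,1,0,0,1) lies in the kernel of the linear map 𝔽₂⁸ → 𝔽₂⁶ determined by M, but v₃ is not in the 𝔽₂-linear span of v₁ = (1,0,1,0,0,1,0,0) and v₂ = (0,1,0,1,0,0,1,0). (The circuit has exactly two quiescent logic states, whose lifts are v₁ and v₂; hence H⁰ of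 the switching sheaf contains a global section that is neither a lifted quiescent logic state nor a linear combination of them. This witnesses the theorem that the cohomology of a switching sheaf over a logic circuit contains different information than the set of its quiescent logic states.) -/
/-- the vector `v₃ = (1,1,1,1,1,0,0,1)` lies in the kernel of the
linear map `𝔽₂⁸ → 𝔽₂⁶` given by the Čech coboundary matrix of the shared-input
circuit, but it is not in the `𝔽₂`-linear span of the two lifted quiescent
logic states `v₁ = (1,0,1,0,0,1,0,0)` and `v₂ = (0,1,0,1,0,0,1,0)`:
`H⁰` contains strictly more than the lifted quiescent logic states. -/
theorem sharedInput_H0_exceeds_QLS :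
    sharedInputCoboundary.mulVecLin ![1,1,1,1,1,0,0,1] = 0 ∧
      ![1,1,1,1,1,0,0,1] ∉
        Submodule.span 𝔽₂
          ({![1,0,1,0,0,1,0,0], ![0,1,0,1,0,0,1,0]} : Set (Fin 8 → 𝔽₂)) := by
  constructor
  · funext i
    fin_cases i <;>
      simp [sharedInputCoboundary, Matrix.mulVecLin, Matrix.mulVec,
        dotProduct, Fin.sum_univ_succ] <;> decide
  · rw [Submodule.mem_span_pair]
    rintro ⟨a, b, h⟩
    have h4 := congr_fun h 4
    simp at h4
end

section
/- Let P and Q be the 2×8 matrices over 𝔽₂ with P = [[1,0,1,0,1,0,1,0],[0,1,0,1,0,1,0,1]] and Q = [[0,0,0,0,1,1,1,0],[1,1,1,1,0,0,0,1]]. Then rank(P + Q) = 1, and the 4×10 block matrix Δ = [[P, I₂],[Q, I₂]] has rank 3. (The feedback wire of the R-S flip-flop exhibits partial feedback.) -/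
/-- The restriction matrix `P` of the R-S flip-flop: restriction from `H⁰(A)` to
the input that the feedback wire connects. -/
def rsP : Matrix (Fin 2) (Fin 8) 𝔽₂ :=
  !![1,0,1,0,1,0,1,0;
     0,1,0,1,0,1,0,1]

/-- The restriction matrix `Q` of the R-S flip-flop: restriction from `H⁰(A)` to
the output that the feedback wire connects. -/
def rsQ : Matrix (Fin 2) (Fin 8) 𝔽₂ :=
  !![0,0,0,0,1,1,1,0;
     1,1,1,1,0,0,0,1]

/- Auxiliary factorization matrices. -/
def rsL1 : Matrix (Fin 2) (Fin 1) 𝔽₂ := !![1; 1]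
def rsR1 : Matrix (Fin 1) (Fin 8) 𝔽₂ := !![1,0,1,0,0,1,0,0]
def rsA1 : Matrix (Fin 1) (Fin 2) 𝔽₂ := !![1,0]
def rsB1 : Matrix (Fin 8) (Fin 1) 𝔽₂ := !![1;0;0;0;0;0;0;0]

def rsDelta : Matrix (Fin 2 ⊕ Fin 2) (Fin 8 ⊕ Fin 2) 𝔽₂ :=
  Matrix.fromBlocks rsP (1 : Matrix (Fin 2) (Fin 2) 𝔽₂)
        rsQ (1 : Matrix (Fin 2) (Fin 2) 𝔽₂)

def rsL2 : Matrix (Fin 2 ⊕ Fin 2) (Fin 3) 𝔽₂ :=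
  Matrix.of (Sum.elim (fun i => (!![1,0,0;0,1,0] : Matrix (Fin 2) (Fin 3) 𝔽₂) i)
    (fun i => (!![0,0,1;1,1,1] : Matrix (Fin 2) (Fin 3) 𝔽₂) i))

def rsR2 : Matrix (Fin 3) (Fin 8 ⊕ Fin 2) 𝔽₂ :=
  Matrix.of fun i => Sum.elim
    ((!![1,0,1,0,1,0,1,0; 0,1,0,1,0,1,0,1; 0,0,0,0,1,1,1,0] : Matrix (Fin 3) (Fin 8) 𝔽₂) i)
    ((!![1,0;0,1;1,0] : Matrix (Fin 3) (Fin 2) 𝔽₂) i)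

def rsA2 : Matrix (Fin 3) (Fin 2 ⊕ Fin 2) 𝔽₂ :=
  Matrix.of fun i => Sum.elim
    ((!![1,0;0,1;0,0] : Matrix (Fin 3) (Fin 2) 𝔽₂) i)
    ((!![0,0;0,0;1,0] : Matrix (Fin 3) (Fin 2) 𝔽₂) i)

def rsB2 : Matrix (Fin 8 ⊕ Fin 2) (Fin 3) 𝔽₂ :=
  Matrix.of (Sum.elim
    (fun i => (!![1,0,0;0,0,0;0,0,0;0,0,0;0,0,0;0,0,0;0,0,0;0,0,0] : Matrix (Fin 8) (Fin 3) 𝔽₂) i)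
    (fun i => (!![0,1,0;0,0,1] : Matrix (Fin 2) (Fin 3) 𝔽₂) i))

lemma rank_sandwich {a b c d : Type*} [Fintype a] [Fintype b] [Fintype c] [Fintype d]
    (A : Matrix a b 𝔽₂) (M : Matrix b c 𝔽₂) (B : Matrix c d 𝔽₂) :
    (A * M * B).rank ≤ M.rank :=
  le_trans (Matrix.rank_mul_le_left _ _) (Matrix.rank_mul_le_right _ _)

/-- for the R-S flip-flop, `rank (P + Q) = 1` and the 4×10
Mayer–Vietoris block matrix `Δ = [[P, I₂],[Q, I₂]]` has rank 3 (partial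
feedback). -/
theorem rs_flipflop_partial_feedback :
    (rsP + rsQ).rank = 1 ∧
      (Matrix.fromBlocks rsP (1 : Matrix (Fin 2) (Fin 2) 𝔽₂)
        rsQ (1 : Matrix (Fin 2) (Fin 2) 𝔽₂)).rank = 3 := by
  constructor
  · apply le_antisymm
    · have h : rsP + rsQ = rsL1 * rsR1 := by decide
      rw [h]
      exact le_trans (Matrix.rank_mul_le_right _ _) (Matrix.rank_le_card_height _)
    · have h : rsA1 * (rsP + rsQ) * rsB1 = (1 : Matrix (Fin 1) (Fin 1) 𝔽₂) := by decide
      calc (1 : ℕ) = (rsA1 * (rsP + rsQ) * rsB1).rank := by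
            rw [h, Matrix.rank_one]; simp
        _ ≤ (rsP + rsQ).rank := rank_sandwich _ _ _
  · show rsDelta.rank = 3
    apply le_antisymm
    · have h : rsDelta = rsL2 * rsR2 := by decide
      calc rsDelta.rank ≤ rsR2.rank := h ▸ Matrix.rank_mul_le_right _ _
        _ ≤ 3 := Matrix.rank_le_card_height _
    · have h : (rsA2 * rsDelta * rsB2).rank = 3 := by
        rw [Matrix.rank_of_isUnit]
        · simp
        · rw [Matrix.isUnit_iff_isUnit_det,
            show (rsA2 * rsDelta * rsB2).det = 1 by decide]
          exact isUnit_one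
      exact h ▸ rank_sandwich _ _ _
end
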